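/- arXiv:1701.08014 — 4 statements merged into one kernel-verified Lean document; each statement's English description precedes it below -/
import Mathlib

section
/- Let {e_i}_{i=1}^N be an orthonormal basis of an N-dimensional real inner product space H, let I_1,...,I_k be subsets of {1,...,N}, and let W_j = span{e_i : i ∈ I_j} for j = 1,...,k. If there exists a positive integer m such that every index i ∈ {1,...,N} belongs to exactly m of the sets I_1,...,I_k, then the family of subspaces {W_j}_{j=1}^k does norm retrieval. -/
open scoped RealInnerProductSpace

noncomputable section

/-- A finite family of subspaces of a finite-dimensional real inner product space does
norm retrieval if equality of the norms of all the orthogonal projections of two vectors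
implies equality of the norms of the vectors. -/
def DoesNormRetrieval {H : Type*} [NormedAddCommGroup H] [InnerProductSpace ℝ H]
    [FiniteDimensional ℝ H] {ι : Type*} (W : ι → Submodule ℝ H) : Prop :=
  ∀ x y : H, (∀ i : ι, ‖Submodule.orthogonalProjection (W i) x‖ = ‖Submodule.orthogonalProjection (W i) y‖) →
    ‖x‖ = ‖y‖

lemma proj_span_eq {H : Type*} [NormedAddCommGroup H] [InnerProductSpace ℝ H]
    [FiniteDimensional ℝ H] {N : ℕ} (e : OrthonormalBasis (Fin N) ℝ H)
    (S : Finset (Fin N)) (x : H) :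
    (Submodule.orthogonalProjection (Submodule.span ℝ (e '' ↑S)) x : H)
      = ∑ i ∈ S, ⟪e i, x⟫ • e i := by
  rw [← Submodule.starProjection_apply]
  apply Submodule.eq_starProjection_of_mem_of_inner_eq_zero
  · exact Submodule.sum_mem _ fun i hi =>
      Submodule.smul_mem _ _ (Submodule.subset_span ⟨i, hi, rfl⟩)
  · intro w hw
    induction hw using Submodule.span_induction with
    | mem w hwmem =>
      obtain ⟨i, hi, rfl⟩ := hwmem
      rw [inner_sub_left, (e.orthonormal).inner_left_sum _ hi]
      simp [real_inner_comm]
    | zero => simp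
    | add a b _ _ ha hb => rw [inner_add_right, ha, hb, add_zero]
    | smul c a _ ha => rw [inner_smul_right, ha, mul_zero]

lemma proj_norm_sq {H : Type*} [NormedAddCommGroup H] [InnerProductSpace ℝ H]
    [FiniteDimensional ℝ H] {N : ℕ} (e : OrthonormalBasis (Fin N) ℝ H)
    (S : Finset (Fin N)) (x : H) :
    ‖(Submodule.orthogonalProjection (Submodule.span ℝ (e '' ↑S)) x : H)‖ ^ 2
      = ∑ i ∈ S, ⟪e i, x⟫ ^ 2 := by
  rw [proj_span_eq, ← real_inner_self_eq_norm_sq,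
    (e.orthonormal).inner_sum (fun i => ⟪e i, x⟫) (fun i => ⟪e i, x⟫) S]
  simp [sq]

lemma parseval {H : Type*} [NormedAddCommGroup H] [InnerProductSpace ℝ H]
    [FiniteDimensional ℝ H] {N : ℕ} (e : OrthonormalBasis (Fin N) ℝ H) (x : H) :
    ∑ i, ⟪e i, x⟫ ^ 2 = ‖x‖ ^ 2 := by
  rw [← real_inner_self_eq_norm_sq]
  conv_rhs => rw [← e.sum_repr' x]
  rw [(e.orthonormal).inner_sum (fun i => ⟪e i, x⟫) (fun i => ⟪e i, x⟫) Finset.univ]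
  simp [sq]

lemma sum_proj_sq {H : Type*} [NormedAddCommGroup H] [InnerProductSpace ℝ H]
    [FiniteDimensional ℝ H] {N k : ℕ} (e : OrthonormalBasis (Fin N) ℝ H)
    (I : Fin k → Finset (Fin N)) (m : ℕ)
    (hcover : ∀ i : Fin N, (Finset.univ.filter (fun j => i ∈ I j)).card = m) (x : H) :
    ∑ j, ‖(Submodule.orthogonalProjection (Submodule.span ℝ (e '' ↑(I j))) x : H)‖ ^ 2
      = (m : ℝ) * ‖x‖ ^ 2 := by
  classical
  calc ∑ j, ‖(Submodule.orthogonalProjection (Submodule.span ℝ (e '' ↑(I j))) x : H)‖ ^ 2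
      = ∑ j, ∑ i ∈ I j, ⟪e i, x⟫ ^ 2 := by
        refine Finset.sum_congr rfl fun j _ => proj_norm_sq e (I j) x
    _ = ∑ j : Fin k, ∑ i : Fin N, if i ∈ I j then ⟪e i, x⟫ ^ 2 else 0 := by
        refine Finset.sum_congr rfl fun j _ => ?_
        rw [Finset.sum_ite_mem, Finset.univ_inter]
    _ = ∑ i : Fin N, ∑ j : Fin k, if i ∈ I j then ⟪e i, x⟫ ^ 2 else 0 :=
        Finset.sum_comm
    _ = ∑ i : Fin N, (m : ℝ) * ⟪e i, x⟫ ^ 2 := by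
        refine Finset.sum_congr rfl fun i _ => ?_
        rw [← Finset.sum_filter, Finset.sum_const, hcover i, nsmul_eq_mul]
    _ = (m : ℝ) * ‖x‖ ^ 2 := by rw [← Finset.mul_sum, parseval]

theorem stmt_0 {H : Type*} [NormedAddCommGroup H] [InnerProductSpace ℝ H]
    [FiniteDimensional ℝ H] {N k : ℕ}
    (hdim : Module.finrank ℝ H = N)
    (e : OrthonormalBasis (Fin N) ℝ H)
    (I : Fin k → Finset (Fin N))
    (W : Fin k → Submodule ℝ H)
    (hW : ∀ j, W j = Submodule.span ℝ (e '' (I j)))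
    (m : ℕ) (hm : 0 < m)
    (hcover : ∀ i : Fin N, (Finset.univ.filter (fun j => i ∈ I j)).card = m) :
    DoesNormRetrieval W := by
  intro x y h
  have hx := sum_proj_sq e I m hcover x
  have hy := sum_proj_sq e I m hcover y
  have hsum : ∀ z : H, ∑ j, ‖Submodule.orthogonalProjection (W j) z‖ ^ 2
      = ∑ j, ‖(Submodule.orthogonalProjection (Submodule.span ℝ (e '' ↑(I j))) z : H)‖ ^ 2 := by
    intro z
    refine Finset.sum_congr rfl fun j _ => ?_
    rw [hW j]
    rfl
  have key : (m : ℝ) * ‖x‖ ^ 2 = (m : ℝ) * ‖y‖ ^ 2 := by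
    rw [← hx, ← hy, ← hsum, ← hsum]
    exact Finset.sum_congr rfl fun j _ => by rw [h j]
  have hm' : (m : ℝ) ≠ 0 := by exact_mod_cast hm.ne'
  have h2 := mul_left_cancel₀ hm' key
  rw [← Real.sqrt_sq (norm_nonneg x), ← Real.sqrt_sq (norm_nonneg y), h2]
end
end

section
/- Let {W_i}_{i=1}^M be subspaces of a finite-dimensional real inner product space H with orthogonal projections {P_i}_{i=1}^M. Then {P_i}_{i=1}^M does norm retrieval if and only if the following holds: for every choice of orthonormal bases {φ_{i,j}}_{j=1}^{d_i} of W_i (where d_i = dim W_i) and every subcollection S ⊆ {(i,j) : 1 ≤ i ≤ M, 1 ≤ j ≤ d_i}, the subspaces (span{φ_{i,j} : (i,j) ∈ S})^⊥ and (span{φ_{i,j} : (i,j) ∈ S^c})^⊥ are orthogonal to each other (every vector of the first is orthogonal to every vector of the second). -/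
open scoped RealInnerProductSpace

noncomputable section

/-- Membership in the orthogonal complement of a span. -/
lemma aux_mem_orthogonal_span_iff {H : Type*} [NormedAddCommGroup H] [InnerProductSpace ℝ H]
    (s : Set H) (v : H) : v ∈ (Submodule.span ℝ s)ᗮ ↔ ∀ u ∈ s, ⟪u, v⟫ = 0 := by
  rw [Submodule.mem_orthogonal]
  constructor
  · exact fun h u hu => h u (Submodule.subset_span hu)
  · intro h u hu
    induction hu using Submodule.span_induction with
    | mem x hx => exact h x hx
    | zero => simp
    | add x y _ _ hx hy => rw [inner_add_left, hx, hy, add_zero]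
    | smul c x _ hx => rw [real_inner_smul_left, hx, mul_zero]

/-- Splitting orthonormal basis adapted to two orthogonal vectors. -/
lemma aux_exists_split_basis {E : Type*} [NormedAddCommGroup E] [InnerProductSpace ℝ E]
    [FiniteDimensional ℝ E] (a b : E) (hab : ⟪a, b⟫ = 0) :
    ∃ B : OrthonormalBasis (Fin (Module.finrank ℝ E)) ℝ E,
      ∀ j, ⟪a, B j⟫ = 0 ∨ ⟪b, B j⟫ = 0 := by
  by_cases ha : a = 0
  · exact ⟨stdOrthonormalBasis ℝ E, fun j => Or.inl (by simp [ha])⟩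
  · haveI : Nontrivial E := nontrivial_of_ne a 0 ha
    have hpos : 0 < Module.finrank ℝ E := Module.finrank_pos
    set j0 : Fin (Module.finrank ℝ E) := ⟨0, hpos⟩ with hj0
    set v : Fin (Module.finrank ℝ E) → E := fun _ => ‖a‖⁻¹ • a with hv
    have hna : ‖a‖ ≠ 0 := norm_ne_zero_iff.mpr ha
    have hvon : Orthonormal ℝ (({j0} : Set (Fin (Module.finrank ℝ E))).restrict v) := by
      constructor
      · intro i
        simp only [Set.restrict_apply, hv, norm_smul, norm_inv, norm_norm]
        show ‖‖a‖⁻¹ • a‖ = 1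
        rw [norm_smul, norm_inv, norm_norm, inv_mul_cancel₀ hna]
      · intro i j hij
        exact absurd (Subtype.ext ((Set.eq_of_mem_singleton i.2).trans
          (Set.eq_of_mem_singleton j.2).symm)) hij
    obtain ⟨B, hB⟩ := hvon.exists_orthonormalBasis_extension_of_card_eq (by simp)
    have hB0 : B j0 = ‖a‖⁻¹ • a := hB j0 rfl
    refine ⟨B, fun j => ?_⟩
    by_cases hj : j = j0
    · right
      have hba : ⟪b, a⟫ = 0 := by rw [real_inner_comm]; exact hab
      rw [hj, hB0, real_inner_smul_right, hba, mul_zero]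
    · left
      have h0 : ⟪B j0, B j⟫ = 0 := B.orthonormal.2 (Ne.symm hj)
      rw [hB0, real_inner_smul_left] at h0
      exact (mul_eq_zero.mp h0).resolve_left (inv_ne_zero hna)

/-- The projections `{P_i}_{i=1}^M` onto subspaces `{W_i}_{i=1}^M` do norm retrieval iff
for every choice of orthonormal bases `{φ_{i,j}}_{j=1}^{d_i}` of the `W_i` and every
subcollection `S` of the index pairs `(i,j)`, the orthogonal complement of the span of
`{φ_{i,j} : (i,j) ∈ S}` is orthogonal to the orthogonal complement of the span of
`{φ_{i,j} : (i,j) ∈ Sᶜ}`. -/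
theorem stmt_15 {H : Type*} [NormedAddCommGroup H] [InnerProductSpace ℝ H]
    [FiniteDimensional ℝ H] {M : ℕ}
    (W : Fin M → Submodule ℝ H) :
    DoesNormRetrieval W ↔
      ∀ φ : (i : Fin M) → Fin (Module.finrank ℝ (W i)) → H,
        (∀ i, Orthonormal ℝ (φ i)) →
        (∀ i, Submodule.span ℝ (Set.range (φ i)) = W i) →
        ∀ S : Set ((i : Fin M) × Fin (Module.finrank ℝ (W i))),
          ∀ u ∈ (Submodule.span ℝ {v : H | ∃ p ∈ S, φ p.1 p.2 = v})ᗮ,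
            ∀ w ∈ (Submodule.span ℝ {v : H | ∃ p ∈ Sᶜ, φ p.1 p.2 = v})ᗮ,
              ⟪u, w⟫ = 0 := by
  constructor
  · -- forward direction
    intro hNR φ hon hspan S u hu w hw
    rw [aux_mem_orthogonal_span_iff] at hu hw
    have key : ‖u + w‖ = ‖u - w‖ := by
      apply hNR
      intro i
      -- construct orthonormal basis of W i from φ i
      have hmem : ∀ j, φ i j ∈ W i := fun j =>
        (hspan i) ▸ Submodule.subset_span (Set.mem_range_self j)
      set ψ : Fin (Module.finrank ℝ (W i)) → (W i) := fun j => ⟨φ i j, hmem j⟩ with hψ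
      have hon' : Orthonormal ℝ ψ := by
        constructor
        · intro j
          simpa [hψ, Submodule.norm_coe] using (hon i).1 j
        · intro j k hjk
          have := (hon i).2 hjk
          simpa [hψ, Submodule.coe_inner] using this
      have hsp : ⊤ ≤ Submodule.span ℝ (Set.range ψ) := by
        have hmap : Submodule.map (W i).subtype (Submodule.span ℝ (Set.range ψ)) =
            Submodule.map (W i).subtype ⊤ := by
          have himg : (W i).subtype '' Set.range ψ = Set.range (φ i) := by
            ext v
            simp only [Set.mem_image, Set.mem_range]
            constructor
            · rintro ⟨x, ⟨j, rfl⟩, rfl⟩; exact ⟨j, rfl⟩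
            · rintro ⟨j, rfl⟩; exact ⟨ψ j, ⟨j, rfl⟩, rfl⟩
          rw [Submodule.map_span, Submodule.map_top, Submodule.range_subtype, himg, hspan i]
        exact le_of_eq (Submodule.map_injective_of_injective
          (Submodule.injective_subtype (W i)) hmap).symm
      set B : OrthonormalBasis (Fin (Module.finrank ℝ (W i))) ℝ (W i) :=
        OrthonormalBasis.mk hon' hsp with hB
      have hBj : ∀ j, B j = ψ j := fun j => by rw [hB, OrthonormalBasis.coe_mk]
      have hcoord : ∀ (z : H) j,
          B.repr (Submodule.orthogonalProjection (W i) z) j = ⟪φ i j, z⟫ := by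
        intro z j
        rw [B.repr_apply_apply, hBj j]
        exact Submodule.inner_orthogonalProjection_eq_of_mem_left (ψ j) z
      rw [← B.repr.norm_map, ← B.repr.norm_map, EuclideanSpace.norm_eq, EuclideanSpace.norm_eq]
      congr 1
      apply Finset.sum_congr rfl
      intro j _
      rw [hcoord, hcoord]
      by_cases hS : (⟨i, j⟩ : (i : Fin M) × Fin (Module.finrank ℝ (W i))) ∈ S
      · have h0 : ⟪φ i j, u⟫ = 0 := hu _ ⟨⟨i, j⟩, hS, rfl⟩
        rw [inner_add_right, inner_sub_right, h0, zero_add, zero_sub, norm_neg]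
      · have h0 : ⟪φ i j, w⟫ = 0 := hw _ ⟨⟨i, j⟩, hS, rfl⟩
        rw [inner_add_right, inner_sub_right, h0, add_zero, sub_zero]
    have h2 := (real_inner_add_sub_eq_zero_iff (u + w) (u - w)).mpr key
    have e1 : (u + w) + (u - w) = (2 : ℝ) • u := by module
    have e2 : (u + w) - (u - w) = (2 : ℝ) • w := by module
    rw [e1, e2, real_inner_smul_left, real_inner_smul_right] at h2
    linarith
  · -- reverse direction
    intro hC x y hxy
    set u := x + y with hu'
    set w := x - y with hw'
    -- the two projections are orthogonal in each W i
    have hio : ∀ i, ⟪Submodule.orthogonalProjection (W i) u, Submodule.orthogonalProjection (W i) w⟫ = 0 := by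
      intro i
      have : Submodule.orthogonalProjection (W i) u = Submodule.orthogonalProjection (W i) x
          + Submodule.orthogonalProjection (W i) y := by rw [hu', map_add]
      have h2 : Submodule.orthogonalProjection (W i) w = Submodule.orthogonalProjection (W i) x
          - Submodule.orthogonalProjection (W i) y := by rw [hw', map_sub]
      rw [this, h2, real_inner_add_sub_eq_zero_iff]
      exact hxy i
    -- adapted bases
    choose B hBsplit using fun i =>
      aux_exists_split_basis (Submodule.orthogonalProjection (W i) u) (Submodule.orthogonalProjection (W i) w)
        (hio i)
    set φ : (i : Fin M) → Fin (Module.finrank ℝ (W i)) → H :=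
      fun i j => ((B i) j : H) with hφ
    have hinner : ∀ (z : H) i j, ⟪φ i j, z⟫ = ⟪(B i) j, Submodule.orthogonalProjection (W i) z⟫ :=
      fun z i j => (Submodule.inner_orthogonalProjection_eq_of_mem_left ((B i) j) z).symm
    have honφ : ∀ i, Orthonormal ℝ (φ i) := by
      intro i
      constructor
      · intro j; exact (B i).orthonormal.1 j
      · intro j k hjk; exact (B i).orthonormal.2 hjk
    have hspanφ : ∀ i, Submodule.span ℝ (Set.range (φ i)) = W i := by
      intro i
      have hr : Set.range (φ i) = (W i).subtype '' Set.range (B i) :=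
        Set.range_comp ((W i).subtype) (B i)
      have hsp : Submodule.span ℝ (Set.range ⇑(B i)) = ⊤ := by
        rw [← (B i).coe_toBasis]; exact (B i).toBasis.span_eq
      rw [hr, ← Submodule.map_span, hsp, Submodule.map_top, Submodule.range_subtype]
    set S : Set ((i : Fin M) × Fin (Module.finrank ℝ (W i))) :=
      {p | ⟪φ p.1 p.2, u⟫ = 0} with hS
    have hmemu : u ∈ (Submodule.span ℝ {v : H | ∃ p ∈ S, φ p.1 p.2 = v})ᗮ := by
      rw [aux_mem_orthogonal_span_iff]
      rintro v ⟨p, hp, rfl⟩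
      exact hp
    have hmemw : w ∈ (Submodule.span ℝ {v : H | ∃ p ∈ Sᶜ, φ p.1 p.2 = v})ᗮ := by
      rw [aux_mem_orthogonal_span_iff]
      rintro v ⟨p, hp, rfl⟩
      have hne : ⟪φ p.1 p.2, u⟫ ≠ 0 := hp
      rw [hinner u] at hne
      have hne' : ⟪Submodule.orthogonalProjection (W p.1) u, (B p.1) p.2⟫ ≠ 0 := by
        rwa [real_inner_comm] at hne
      have h0 : ⟪Submodule.orthogonalProjection (W p.1) w, (B p.1) p.2⟫ = 0 :=
        (hBsplit p.1 p.2).resolve_left hne'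
      rw [hinner w, real_inner_comm]
      exact h0
    have := hC φ honφ hspanφ S u hmemu w hmemw
    rw [hu', hw'] at this
    exact (real_inner_add_sub_eq_zero_iff x y).mp this
end
end

section
/- If {φ_i}_{i=1}^N is a family of exactly N vectors in an N-dimensional real inner product space H that does norm retrieval, then the vectors are pairwise orthogonal: ⟨φ_i, φ_j⟩ = 0 for all i ≠ j. -/
open scoped RealInnerProductSpace

noncomputable section

/-- Norm retrieval for a family of vectors in a finite-dimensional real inner product
space. -/
def DoesNormRetrievalVectors {H : Type*} [NormedAddCommGroup H] [InnerProductSpace ℝ H]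
    [FiniteDimensional ℝ H] {ι : Type*} (φ : ι → H) : Prop :=
  ∀ x y : H, (∀ i : ι, |⟪x, φ i⟫| = |⟪y, φ i⟫|) → ‖x‖ = ‖y‖

/-- If a family of exactly `N` vectors does norm retrieval in an `N`-dimensional real
inner product space, then the vectors are pairwise orthogonal. -/
theorem stmt_17 {H : Type*} [NormedAddCommGroup H] [InnerProductSpace ℝ H]
    [FiniteDimensional ℝ H] {N : ℕ} (hdim : Module.finrank ℝ H = N)
    (φ : Fin N → H) (hφ : DoesNormRetrievalVectors φ) :
    ∀ i j : Fin N, i ≠ j → ⟪φ i, φ j⟫ = 0 := by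
  intro i j hij
  classical
  have hN : 0 < N := Fin.pos i
  set V : Submodule ℝ H :=
    Submodule.span ℝ (((Finset.univ.erase i).image φ : Finset H) : Set H) with hV
  -- V has finrank < N, so its orthogonal complement is nontrivial
  have hVlt : Module.finrank ℝ V < N := by
    calc Module.finrank ℝ V ≤ ((Finset.univ.erase i).image φ).card :=
          finrank_span_finset_le_card _
      _ ≤ (Finset.univ.erase i).card := Finset.card_image_le
      _ = N - 1 := by simp [Finset.card_erase_of_mem]
      _ < N := Nat.sub_lt hN one_pos
  have horth : Module.finrank ℝ V + Module.finrank ℝ Vᗮ = N := by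
    rw [← hdim]; exact Submodule.finrank_add_finrank_orthogonal V
  have hpos : 0 < Module.finrank ℝ Vᗮ := by omega
  obtain ⟨x, hxV, hx0⟩ : ∃ x ∈ Vᗮ, x ≠ 0 := by
    have : Nontrivial Vᗮ := Module.finrank_pos_iff.mp hpos
    obtain ⟨⟨x, hxV⟩, hx0⟩ := exists_ne (0 : Vᗮ)
    exact ⟨x, hxV, fun h => hx0 (Subtype.ext h)⟩
  -- x is orthogonal to φ k for all k ≠ i
  have hxk : ∀ k : Fin N, k ≠ i → ⟪x, φ k⟫ = 0 := by
    intro k hk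
    have hmem : φ k ∈ V := Submodule.subset_span (by simp only [Finset.coe_image]; exact ⟨k, by simp [hk], rfl⟩)
    have := hxV (φ k) hmem
    rwa [real_inner_comm]
  -- x is not orthogonal to φ i
  have hxi : ⟪x, φ i⟫ ≠ 0 := by
    intro h
    have : ‖x‖ = ‖(0 : H)‖ := by
      apply hφ
      intro k
      by_cases hk : k = i
      · subst hk; simp [h]
      · simp [hxk k hk]
    simp at this
    exact hx0 this
  -- x is orthogonal to everything orthogonal to φ i
  have hkey : ∀ y : H, ⟪y, φ i⟫ = 0 → ⟪x, y⟫ = 0 := by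
    intro y hy
    have hnorm : ‖x + y‖ = ‖x - y‖ := by
      apply hφ
      intro k
      by_cases hk : k = i
      · subst hk
        rw [inner_add_left, inner_sub_left, hy]
        ring_nf
      · rw [inner_add_left, inner_sub_left, hxk k hk]
        rw [zero_add, zero_sub, abs_neg]
    have h2 : ‖x + y‖ ^ 2 = ‖x - y‖ ^ 2 := by rw [hnorm]
    rw [norm_add_sq_real, norm_sub_sq_real] at h2
    linarith
  -- hence x ∈ span of φ i
  have hxspan : x ∈ (ℝ ∙ φ i) := by
    rw [← Submodule.orthogonal_orthogonal (ℝ ∙ φ i)]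
    intro y hy
    have hy' : ⟪y, φ i⟫ = 0 := by
      have := hy (φ i) (Submodule.mem_span_singleton_self _)
      rwa [real_inner_comm] at this
    have := hkey y hy'
    rwa [real_inner_comm] at this
  obtain ⟨c, hc⟩ := Submodule.mem_span_singleton.mp hxspan
  have hcne : c ≠ 0 := by
    rintro rfl; rw [zero_smul] at hc; exact hx0 hc.symm
  have hxj : ⟪x, φ j⟫ = 0 := hxk j hij.symm
  rw [← hc, real_inner_smul_left] at hxj
  rcases mul_eq_zero.mp hxj with h | h
  · exact absurd h hcne
  · exact h
end
end

section
/- Let {φ_i}_{i=1}^N be a Parseval frame for a finite-dimensional real inner product space H, let I ⊆ {1,...,N}, and set W_I = span{φ_i : i ∈ I} and W_{I^c} = span{φ_i : i ∈ I^c}. If W_I ∩ W_{I^c} = {0}, then W_I and W_{I^c} are orthogonal: ⟨u, v⟩ = 0 for all u ∈ W_I and v ∈ W_{I^c}. -/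
open scoped RealInnerProductSpace

noncomputable section

/-- If `{φ_i}_{i=1}^N` is a Parseval frame for a finite-dimensional real inner product
space, `I` is a set of indices, `W_I` and `W_{I^c}` are the spans of the corresponding
frame vectors, and `W_I ∩ W_{I^c} = {0}`, then `W_I ⊥ W_{I^c}`. -/
theorem stmt_19 {H : Type*} [NormedAddCommGroup H] [InnerProductSpace ℝ H]
    [FiniteDimensional ℝ H] {N : ℕ} (φ : Fin N → H)
    (hparseval : ∀ x : H, ∑ i : Fin N, |⟪x, φ i⟫| ^ 2 = ‖x‖ ^ 2)
    (I : Set (Fin N))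
    (hmeet : Submodule.span ℝ (φ '' I) ⊓ Submodule.span ℝ (φ '' Iᶜ) = ⊥) :
    ∀ u ∈ Submodule.span ℝ (φ '' I), ∀ v ∈ Submodule.span ℝ (φ '' Iᶜ), ⟪u, v⟫ = 0 := by
  classical
  -- Parseval in inner product form
  have P : ∀ x : H, ∑ i : Fin N, ⟪x, φ i⟫ ^ 2 = ⟪x, x⟫ := by
    intro x
    have h := hparseval x
    simp only [sq_abs] at h
    rw [h, real_inner_self_eq_norm_sq]
  -- Polarization
  have key : ∀ x y : H, ∑ i : Fin N, ⟪x, φ i⟫ * ⟪y, φ i⟫ = ⟪x, y⟫ := by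
    intro x y
    have h1 := P x
    have h2 := P y
    have h3 := P (x + y)
    have hexp : ∀ i : Fin N, ⟪x + y, φ i⟫ ^ 2
        = ⟪x, φ i⟫ ^ 2 + 2 * (⟪x, φ i⟫ * ⟪y, φ i⟫) + ⟪y, φ i⟫ ^ 2 := by
      intro i
      rw [inner_add_left]
      ring
    rw [Finset.sum_congr rfl fun i _ => hexp i] at h3
    rw [Finset.sum_add_distrib, Finset.sum_add_distrib] at h3
    rw [real_inner_add_add_self] at h3
    rw [← Finset.mul_sum] at h3
    linarith
  -- The frame operator is the identity
  have hS : ∀ x : H, ∑ i : Fin N, ⟪x, φ i⟫ • φ i = x := by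
    intro x
    set s : H := ∑ i : Fin N, ⟪x, φ i⟫ • φ i with hs
    have hz : ∀ z : H, ⟪s - x, z⟫ = 0 := by
      intro z
      rw [inner_sub_left]
      have : ⟪s, z⟫ = ∑ i : Fin N, ⟪x, φ i⟫ * ⟪z, φ i⟫ := by
        rw [hs, sum_inner]
        refine Finset.sum_congr rfl fun i _ => ?_
        rw [real_inner_smul_left, real_inner_comm (φ i) z]
      rw [this, key x z, sub_self]
    have := hz (s - x)
    rw [inner_self_eq_zero] at this
    exact sub_eq_zero.mp this
  intro u hu v hv
  -- decompose u
  set c : Fin N → ℝ := fun i => ⟪u, φ i⟫ with hc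
  set a : H := ∑ i ∈ Finset.univ.filter (· ∈ I), c i • φ i with ha
  set b : H := ∑ i ∈ Finset.univ.filter (¬ · ∈ I), c i • φ i with hb
  have hab : a + b = u := by
    rw [ha, hb, Finset.sum_filter_add_sum_filter_not]
    exact hS u
  have haI : a ∈ Submodule.span ℝ (φ '' I) := by
    refine Submodule.sum_mem _ fun i hi => ?_
    refine Submodule.smul_mem _ _ (Submodule.subset_span ?_)
    exact ⟨i, (Finset.mem_filter.mp hi).2, rfl⟩
  have hbIc : b ∈ Submodule.span ℝ (φ '' Iᶜ) := by
    refine Submodule.sum_mem _ fun i hi => ?_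
    refine Submodule.smul_mem _ _ (Submodule.subset_span ?_)
    exact ⟨i, (Finset.mem_filter.mp hi).2, rfl⟩
  have hb0 : b = 0 := by
    have hbI : b ∈ Submodule.span ℝ (φ '' I) := by
      have : b = u - a := by rw [← hab]; abel
      rw [this]; exact Submodule.sub_mem _ hu haI
    have : b ∈ Submodule.span ℝ (φ '' I) ⊓ Submodule.span ℝ (φ '' Iᶜ) := ⟨hbI, hbIc⟩
    rw [hmeet] at this
    exact this
  have hua : u = a := by rw [← hab, hb0, add_zero]
  -- inner product of u with itself equals sum over I
  have hsumI : ⟪u, u⟫ = ∑ i ∈ Finset.univ.filter (· ∈ I), c i ^ 2 := by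
    nth_rewrite 2 [hua]
    rw [ha, inner_sum]
    refine Finset.sum_congr rfl fun i _ => ?_
    rw [real_inner_smul_right, hc, sq]
  have hsplit : (∑ i ∈ Finset.univ.filter (· ∈ I), c i ^ 2)
      + ∑ i ∈ Finset.univ.filter (¬ · ∈ I), c i ^ 2 = ∑ i : Fin N, c i ^ 2 :=
    Finset.sum_filter_add_sum_filter_not _ _ _
  have hPu : ∑ i : Fin N, c i ^ 2 = ⟪u, u⟫ := P u
  have hcompl0 : ∑ i ∈ Finset.univ.filter (¬ · ∈ I), c i ^ 2 = 0 := by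
    linarith [hsplit, hPu, hsumI]
  have hcj : ∀ j : Fin N, j ∉ I → ⟪u, φ j⟫ = 0 := by
    intro j hj
    have hnn : ∀ i ∈ Finset.univ.filter (¬ · ∈ I), (0:ℝ) ≤ c i ^ 2 :=
      fun i _ => sq_nonneg _
    have := (Finset.sum_eq_zero_iff_of_nonneg hnn).mp hcompl0 j
      (Finset.mem_filter.mpr ⟨Finset.mem_univ _, hj⟩)
    exact pow_eq_zero_iff (by norm_num) |>.mp this
  -- conclude by span induction on v
  induction hv using Submodule.span_induction with
  | mem w hw =>
    obtain ⟨j, hj, rfl⟩ := hw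
    exact hcj j hj
  | zero => exact inner_zero_right u
  | add y z _ _ hy hz => rw [inner_add_right, hy, hz, add_zero]
  | smul t y _ hy => rw [real_inner_smul_right, hy, mul_zero]
end
end
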